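/- Let d be an odd positive integer, δ ∈ ℝ, and let the Markov chain (l_j) on {-(d-1)/2,…,(d-1)/2} start at l_0 = k with transition matrix M_{lk} = |⟨θ_l|θ_{k+δ}⟩|². Then for any integer m with |m| ≤ (d-1)/2 and any I ≥ 1, the expectation E[exp(2πi m l_I / d)] equals e^{2πim(k + Iδ)/d} · (1 - (1 - e^{2πiδ·sign(-m)})|m|/d)^I. -/

import Mathlib

open Complex
open Finset

/-- Physical index: k ∈ Fin d represents the integer k - (d-1)/2. -/
def clockIdx (d : ℕ) (k : Fin d) : ℤ := (k : ℤ) - ((d : ℤ) - 1) / 2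

/-- The "time state" vector |θ_s⟩ ∈ ℂ^d with components d^{-1/2} e^{-2πi s n/d}. -/
noncomputable def clockVec (d : ℕ) (s : ℝ) : EuclideanSpace ℂ (Fin d) := WithLp.toLp 2 fun n =>
  (1 / Real.sqrt d : ℝ) * Complex.exp (-2 * Real.pi * Complex.I * s * (clockIdx d n : ℂ) / d)

/-- The transition matrix M_{lk} = |⟨θ_l | θ_{k+δ}⟩|². -/
noncomputable def clockM (d : ℕ) (δ : ℝ) : Matrix (Fin d) (Fin d) ℂ :=
  Matrix.of fun l k =>
    ((‖(inner ℂ (clockVec d (clockIdx d l : ℝ))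
        (clockVec d ((clockIdx d k : ℝ) + δ)) : ℂ)‖) ^ 2 : ℝ)

lemma sum_exp_fin (d : ℕ) (hpos : 0 < d) (t : ℤ) :
    ∑ l : Fin d, Complex.exp (2 * Real.pi * Complex.I * (t : ℂ) * (clockIdx d l : ℂ) / d)
      = if (d : ℤ) ∣ t then (d : ℂ) else 0 := by
  have hd0 : (d : ℂ) ≠ 0 := Nat.cast_ne_zero.mpr hpos.ne'
  by_cases h : (d : ℤ) ∣ t
  · obtain ⟨s, rfl⟩ := h
    rw [if_pos ⟨s, rfl⟩]
    have h1 : ∀ l : Fin d,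
        Complex.exp (2 * Real.pi * Complex.I * (((d : ℤ) * s : ℤ) : ℂ) * (clockIdx d l : ℂ) / d) = 1 := by
      intro l
      rw [show (2 * Real.pi * Complex.I * (((d : ℤ) * s : ℤ) : ℂ) * (clockIdx d l : ℂ) / d)
          = ((s * clockIdx d l : ℤ) : ℂ) * (2 * Real.pi * Complex.I) by
        push_cast; field_simp]
      exact Complex.exp_int_mul_two_pi_mul_I _
    push_cast at h1 ⊢
    simp [h1, card_univ]
  · rw [if_neg h]
    set ω : ℂ := Complex.exp (2 * Real.pi * Complex.I * (t : ℂ) / d) with hω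
    have hω0 : ω ≠ 0 := Complex.exp_ne_zero _
    have hω1 : ω ≠ 1 := by
      intro hone
      rw [hω, Complex.exp_eq_one_iff] at hone
      obtain ⟨n, hn⟩ := hone
      apply h
      refine ⟨n, ?_⟩
      have h2 : (2 * (Real.pi:ℂ) * Complex.I) ≠ 0 := by
        simp [Real.pi_ne_zero, Complex.I_ne_zero]
      have h3 : (t : ℂ) = (d : ℂ) * n := by
        field_simp at hn
        have h4 : (2 * (Real.pi:ℂ) * Complex.I) * (t : ℂ)
            = (2 * (Real.pi:ℂ) * Complex.I) * ((d : ℂ) * n) := by linear_combination (2 * (Real.pi:ℂ) * Complex.I) * hn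
        exact mul_left_cancel₀ h2 h4
      exact_mod_cast h3
    have hωd : ω ^ (d : ℕ) = 1 := by
      rw [hω, ← Complex.exp_nat_mul]
      rw [show (d : ℂ) * (2 * Real.pi * Complex.I * (t : ℂ) / d) = (t : ℤ) * (2 * Real.pi * Complex.I) by
        field_simp]
      exact Complex.exp_int_mul_two_pi_mul_I _
    have hterm : ∀ l : Fin d,
        Complex.exp (2 * Real.pi * Complex.I * (t : ℂ) * (clockIdx d l : ℂ) / d)
          = ω ^ ((l : ℕ)) * ω ^ (-(((d : ℤ) - 1) / 2)) := by
      intro l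
      rw [← zpow_natCast, ← zpow_add₀ hω0, hω, ← Complex.exp_int_mul]
      congr 1
      rw [clockIdx]
      push_cast
      ring
    rw [Finset.sum_congr rfl (fun l _ => hterm l), ← Finset.sum_mul,
      Fin.sum_univ_eq_sum_range (fun i => ω ^ i) d, geom_sum_eq hω1, hωd]
    simp

lemma inner_clockVec (d : ℕ) (hpos : 0 < d) (δ : ℝ) (l k : Fin d) :
    (inner ℂ (clockVec d (clockIdx d l : ℝ)) (clockVec d ((clockIdx d k : ℝ) + δ)) : ℂ)
      = (1 / (d : ℂ)) * ∑ n : Fin d,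
        Complex.exp (-2 * Real.pi * Complex.I * ((clockIdx d k : ℂ) + δ - (clockIdx d l : ℂ))
          * (clockIdx d n : ℂ) / d) := by
  rw [PiLp.inner_apply, Finset.mul_sum]
  refine Finset.sum_congr rfl fun n _ => ?_
  rw [RCLike.inner_apply]
  simp only [clockVec]
  rw [map_mul, ← Complex.exp_conj, Complex.conj_ofReal]
  rw [show (starRingEnd ℂ) (-2 * (Real.pi:ℂ) * Complex.I * (((clockIdx d l : ℤ):ℝ):ℂ)
        * ((clockIdx d n : ℤ):ℂ) / ((d:ℕ):ℂ))
      = 2 * (Real.pi:ℂ) * Complex.I * (((clockIdx d l : ℤ):ℝ):ℂ) * ((clockIdx d n:ℤ):ℂ) / ((d:ℕ):ℂ) from by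
    simp only [map_div₀, map_mul, map_neg, map_ofNat, Complex.conj_I, Complex.conj_ofReal,
      map_intCast, map_natCast]
    ring]
  rw [mul_mul_mul_comm, ← Complex.exp_add, ← Complex.ofReal_mul]
  rw [show (1 / Real.sqrt d) * (1 / Real.sqrt d) = 1 / (d:ℝ) by
    rw [div_mul_div_comm, Real.mul_self_sqrt (Nat.cast_nonneg d), one_mul]]
  push_cast
  congr 1
  field_simp
  ring

def sig (d : ℕ) (m : ℤ) (n : Fin d) (hpos : 0 < d) : Fin d :=
  ⟨(((n : ℤ) + m) % d).toNat, by
    have h1 : (0:ℤ) < d := Int.natCast_pos.mpr hpos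
    have h2 : 0 ≤ ((n : ℤ) + m) % d := Int.emod_nonneg _ h1.ne'
    have h3 : ((n : ℤ) + m) % d < d := Int.emod_lt_of_pos _ h1
    omega⟩

lemma sig_coe (d : ℕ) (m : ℤ) (n : Fin d) (hpos : 0 < d) :
    ((sig d m n hpos : Fin d) : ℤ) = ((n : ℤ) + m) % d := by
  have h1 : (0:ℤ) < d := Int.natCast_pos.mpr hpos
  have h2 : 0 ≤ ((n : ℤ) + m) % d := Int.emod_nonneg _ h1.ne'
  simp only [sig]
  omega

lemma sig_dvd (d : ℕ) (m : ℤ) (n : Fin d) (hpos : 0 < d) :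
    (d : ℤ) ∣ ((n : ℤ) - (sig d m n hpos : ℤ) + m) := by
  rw [sig_coe]
  refine ⟨((n : ℤ) + m) / d, ?_⟩
  have := Int.mul_ediv_add_emod ((n : ℤ) + m) (d : ℤ)
  linarith

lemma sig_uniq (d : ℕ) (m : ℤ) (n : Fin d) (hpos : 0 < d) (b : Fin d)
    (hb : (d : ℤ) ∣ ((n : ℤ) - (b : ℤ) + m)) : b = sig d m n hpos := by
  have h1 : (0:ℤ) < d := Int.natCast_pos.mpr hpos
  have h2 : ((b : ℤ)) % d = ((n : ℤ) + m) % d :=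
    Int.modEq_iff_dvd.mpr (by convert hb using 1; ring)
  have h3 : ((b : ℤ)) % d = b := Int.emod_eq_of_lt (by positivity) (by exact_mod_cast b.2)
  have h4 := sig_coe d m n hpos
  exact Fin.ext (by omega)

lemma clockM_eq (d : ℕ) (hpos : 0 < d) (δ : ℝ) (l k : Fin d) :
    clockM d δ l k
      = (1/(d:ℂ)^2) * ∑ n : Fin d, ∑ n' : Fin d,
          Complex.exp (-2*Real.pi*Complex.I*((clockIdx d k : ℂ)+δ)*(((n:ℕ):ℂ)-((n':ℕ):ℂ))/d)
            * Complex.exp (2*Real.pi*Complex.I*(clockIdx d l : ℂ)*(((n:ℕ):ℂ)-((n':ℕ):ℂ))/d) := by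
  have hz := inner_clockVec d hpos δ l k
  set z : ℂ := inner ℂ (clockVec d (clockIdx d l : ℝ)) (clockVec d ((clockIdx d k : ℝ) + δ)) with hzdef
  have h1 : clockM d δ l k = z * (starRingEnd ℂ) z := by
    simp only [clockM, Matrix.of_apply, ← hzdef]
    rw [Complex.sq_norm]
    exact_mod_cast (Complex.mul_conj z).symm
  rw [h1, hz, map_mul, map_sum]
  have hconj1 : (starRingEnd ℂ) (1 / (d:ℂ)) = 1 / (d:ℂ) := by
    simp
  have hconj2 : ∀ n' : Fin d,
      (starRingEnd ℂ) (Complex.exp (-2 * Real.pi * Complex.I * ((clockIdx d k : ℂ) + δ - (clockIdx d l : ℂ))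
          * (clockIdx d n' : ℂ) / d))
        = Complex.exp (2 * Real.pi * Complex.I * ((clockIdx d k : ℂ) + δ - (clockIdx d l : ℂ))
          * (clockIdx d n' : ℂ) / d) := by
    intro n'
    rw [← Complex.exp_conj]
    congr 1
    simp only [map_div₀, map_mul, map_sub, map_add, map_neg, map_ofNat, Complex.conj_I,
      Complex.conj_ofReal, map_intCast, map_natCast]
    ring
  rw [Finset.sum_congr rfl fun n' _ => hconj2 n']
  rw [mul_mul_mul_comm, Finset.sum_mul_sum, hconj1]
  rw [show (1/(d:ℂ)) * (1/(d:ℂ)) = 1/(d:ℂ)^2 by ring]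
  congr 1
  refine Finset.sum_congr rfl fun n _ => Finset.sum_congr rfl fun n' _ => ?_
  rw [← Complex.exp_add, ← Complex.exp_add]
  congr 1
  simp only [clockIdx]
  push_cast
  ring

lemma key_step (d : ℕ) (hpos : 0 < d) (δ : ℝ) (m : ℤ) (hm : |m| ≤ ((d:ℤ)-1)/2) (k : Fin d) :
    ∑ l : Fin d, clockM d δ l k * Complex.exp (2*Real.pi*Complex.I*(m:ℂ)*(clockIdx d l : ℂ)/d)
      = Complex.exp (2*Real.pi*Complex.I*(m:ℂ)*((clockIdx d k : ℂ) + δ)/d)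
        * (1 - (1 - Complex.exp (2*Real.pi*Complex.I*δ*(((-m).sign : ℤ):ℂ))) * ((|m|:ℤ):ℂ)/d) := by
  have hd0 : (d:ℂ) ≠ 0 := Nat.cast_ne_zero.mpr hpos.ne'
  have hdZ : (0:ℤ) < d := Int.natCast_pos.mpr hpos
  have hmd : |m| < d := by
    have : ((d:ℤ)-1)/2 < d := by omega
    omega
  -- abbreviations
  set P : ℂ := Complex.exp (2*Real.pi*Complex.I*(m:ℂ)*((clockIdx d k : ℂ) + δ)/d) with hP
  set E : ℂ := Complex.exp (2*Real.pi*Complex.I*δ*(((-m).sign : ℤ):ℂ)) with hE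
  -- Step 1: reduce to the paired sum
  have step1 : ∑ l : Fin d, clockM d δ l k * Complex.exp (2*Real.pi*Complex.I*(m:ℂ)*(clockIdx d l : ℂ)/d)
      = (1/(d:ℂ)^2) * ∑ n : Fin d, ∑ n' : Fin d,
          Complex.exp (-2*Real.pi*Complex.I*((clockIdx d k : ℂ)+δ)*(((n:ℕ):ℂ)-((n':ℕ):ℂ))/d)
            * (if (d:ℤ) ∣ ((n:ℤ) - (n':ℤ) + m) then (d:ℂ) else 0) := by
    have h1 : ∀ l : Fin d, clockM d δ l k * Complex.exp (2*Real.pi*Complex.I*(m:ℂ)*(clockIdx d l : ℂ)/d)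
        = (1/(d:ℂ)^2) * ∑ n : Fin d, ∑ n' : Fin d,
            Complex.exp (-2*Real.pi*Complex.I*((clockIdx d k : ℂ)+δ)*(((n:ℕ):ℂ)-((n':ℕ):ℂ))/d)
              * Complex.exp (2*Real.pi*Complex.I*((((n:ℤ) - (n':ℤ) + m : ℤ)):ℂ)*(clockIdx d l : ℂ)/d) := by
      intro l
      rw [clockM_eq d hpos δ l k, mul_assoc, Finset.sum_mul]
      congr 1
      refine Finset.sum_congr rfl fun n _ => ?_
      rw [Finset.sum_mul]
      refine Finset.sum_congr rfl fun n' _ => ?_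
      rw [mul_assoc, ← Complex.exp_add]
      congr 2
      push_cast
      field_simp
    rw [Finset.sum_congr rfl fun l _ => h1 l, ← Finset.mul_sum]
    congr 1
    rw [Finset.sum_comm]
    refine Finset.sum_congr rfl fun n _ => ?_
    rw [Finset.sum_comm]
    refine Finset.sum_congr rfl fun n' _ => ?_
    rw [← Finset.mul_sum]
    congr 1
    exact sum_exp_fin d hpos ((n:ℤ) - (n':ℤ) + m)
  rw [step1]
  -- Step 2: collapse inner sum using sig
  have step2 : ∀ n : Fin d, (∑ n' : Fin d,
      Complex.exp (-2*Real.pi*Complex.I*((clockIdx d k : ℂ)+δ)*(((n:ℕ):ℂ)-((n':ℕ):ℂ))/d)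
        * (if (d:ℤ) ∣ ((n:ℤ) - (n':ℤ) + m) then (d:ℂ) else 0))
      = Complex.exp (-2*Real.pi*Complex.I*((clockIdx d k : ℂ)+δ)*(((n:ℤ):ℂ)-(((((n:ℤ)+m) % d) : ℤ):ℂ))/d) * d := by
    intro n
    rw [Finset.sum_eq_single (sig d m n hpos)]
    · rw [if_pos (sig_dvd d m n hpos)]
      congr 2
      rw [← sig_coe d m n hpos]
      push_cast
      ring
    · intro b _ hb
      rw [if_neg (fun hdvd => hb (sig_uniq d m n hpos b hdvd)), mul_zero]
    · intro h
      exact absurd (Finset.mem_univ _) h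
  rw [Finset.sum_congr rfl fun n _ => step2 n]
  -- Step 3: counting
  rw [Fin.sum_univ_eq_sum_range (fun a : ℕ => Complex.exp (-2*Real.pi*Complex.I*((clockIdx d k : ℂ)+δ)*(((a:ℤ):ℂ)-((((a:ℤ)+m) % d : ℤ):ℂ))/d) * (d:ℂ)) d]
  have hcount : ∑ n ∈ Finset.range d, Complex.exp (-2*Real.pi*Complex.I*((clockIdx d k : ℂ)+δ)*(((n:ℤ):ℂ)-((((n:ℤ)+m) % d : ℤ):ℂ))/d) * (d:ℂ)
      = ((d:ℂ) - ((|m|:ℤ):ℂ)) * (P * d) + ((|m|:ℤ):ℂ) * (P * E * d) := by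
    rcases le_or_gt 0 m with hm0 | hm0
    · -- 0 ≤ m : wrap happens for n ∈ [d - m, d)
      rw [abs_of_nonneg hm0] at hmd hm
      have hmtd : m.toNat ≤ d := by omega
      have hval1 : ∀ n ∈ Finset.Ico 0 (d - m.toNat),
          Complex.exp (-2*Real.pi*Complex.I*((clockIdx d k : ℂ)+δ)*(((n:ℤ):ℂ)-((((n:ℤ)+m) % d : ℤ):ℂ))/d) * (d:ℂ)
            = P * d := by
        intro n hn
        rw [Finset.mem_Ico] at hn
        have hmod : ((n:ℤ)+m) % d = (n:ℤ)+m := Int.emod_eq_of_lt (by omega) (by omega)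
        rw [hmod, hP]
        congr 2
        push_cast
        field_simp
        ring
      have hval2 : ∀ n ∈ Finset.Ico (d - m.toNat) d,
          Complex.exp (-2*Real.pi*Complex.I*((clockIdx d k : ℂ)+δ)*(((n:ℤ):ℂ)-((((n:ℤ)+m) % d : ℤ):ℂ))/d) * (d:ℂ)
            = P * E * d := by
        intro n hn
        rw [Finset.mem_Ico] at hn
        have hge : d ≤ n + m.toNat := by omega
        have hmpos : 0 < m := by omega
        have hmod : ((n:ℤ)+m) % d = (n:ℤ)+m-d := by
          have h1 : ((n:ℤ)+m-d) % d = (n:ℤ)+m-d :=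
            Int.emod_eq_of_lt (by omega) (by omega)
          calc ((n:ℤ)+m) % d = (((n:ℤ)+m-d) + (d:ℤ)*1) % d := by congr 1; ring
            _ = ((n:ℤ)+m-d) % d := Int.add_mul_emod_self_left _ _ _
            _ = (n:ℤ)+m-d := h1
        have hsign : ((-m).sign) = (-1 : ℤ) := Int.sign_eq_neg_one_iff_neg.mpr (by omega)
        rw [hmod, hP, hE, hsign]
        calc Complex.exp (-2*Real.pi*Complex.I*((clockIdx d k : ℂ)+δ)*(((n:ℤ):ℂ)-(((n:ℤ)+m-d : ℤ):ℂ))/d) * (d:ℂ)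
            = Complex.exp (((-clockIdx d k : ℤ):ℂ) * (2*Real.pi*Complex.I)
                + (2*Real.pi*Complex.I*(m:ℂ)*((clockIdx d k : ℂ)+δ)/d
                  + 2*Real.pi*Complex.I*δ*(((-1:ℤ)):ℂ))) * (d:ℂ) := by
              congr 2
              push_cast
              field_simp
              ring
          _ = Complex.exp (2*Real.pi*Complex.I*(m:ℂ)*((clockIdx d k : ℂ)+δ)/d)
                * Complex.exp (2*Real.pi*Complex.I*δ*(((-1:ℤ)):ℂ)) * (d:ℂ) := by
              rw [Complex.exp_add, Complex.exp_int_mul_two_pi_mul_I, one_mul, Complex.exp_add]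
      rw [Finset.range_eq_Ico, ← Finset.sum_Ico_consecutive _ (Nat.zero_le (d - m.toNat)) (Nat.sub_le d m.toNat),
        Finset.sum_eq_card_nsmul hval1, Finset.sum_eq_card_nsmul hval2, Nat.card_Ico, Nat.card_Ico]
      have habs : ((|m|:ℤ):ℂ) = (m.toNat:ℂ) := by
        rw [abs_of_nonneg hm0]
        exact_mod_cast congrArg (fun z : ℤ => (z:ℂ)) (Int.toNat_of_nonneg hm0).symm
      rw [habs]
      simp only [nsmul_eq_mul]
      rw [Nat.sub_zero, Nat.sub_sub_self hmtd]
      push_cast [Nat.cast_sub hmtd]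
      ring
    · -- m < 0 : wrap happens for n ∈ [0, -m)
      rw [abs_of_neg hm0] at hmd hm
      have hmtd : (-m).toNat ≤ d := by omega
      have hval1 : ∀ n ∈ Finset.Ico ((-m).toNat) d,
          Complex.exp (-2*Real.pi*Complex.I*((clockIdx d k : ℂ)+δ)*(((n:ℤ):ℂ)-((((n:ℤ)+m) % d : ℤ):ℂ))/d) * (d:ℂ)
            = P * d := by
        intro n hn
        rw [Finset.mem_Ico] at hn
        have hmod : ((n:ℤ)+m) % d = (n:ℤ)+m := Int.emod_eq_of_lt (by omega) (by omega)
        rw [hmod, hP]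
        congr 2
        push_cast
        field_simp
        ring
      have hval2 : ∀ n ∈ Finset.Ico 0 ((-m).toNat),
          Complex.exp (-2*Real.pi*Complex.I*((clockIdx d k : ℂ)+δ)*(((n:ℤ):ℂ)-((((n:ℤ)+m) % d : ℤ):ℂ))/d) * (d:ℂ)
            = P * E * d := by
        intro n hn
        rw [Finset.mem_Ico] at hn
        have hmod : ((n:ℤ)+m) % d = (n:ℤ)+m+d := by
          have h1 : ((n:ℤ)+m+d) % d = (n:ℤ)+m+d :=
            Int.emod_eq_of_lt (by omega) (by omega)
          calc ((n:ℤ)+m) % d = (((n:ℤ)+m+d) + (d:ℤ)*(-1)) % d := by congr 1; ring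
            _ = ((n:ℤ)+m+d) % d := Int.add_mul_emod_self_left _ _ _
            _ = (n:ℤ)+m+d := h1
        have hsign : ((-m).sign) = (1 : ℤ) := Int.sign_eq_one_iff_pos.mpr (by omega)
        rw [hmod, hP, hE, hsign]
        calc Complex.exp (-2*Real.pi*Complex.I*((clockIdx d k : ℂ)+δ)*(((n:ℤ):ℂ)-(((n:ℤ)+m+d : ℤ):ℂ))/d) * (d:ℂ)
            = Complex.exp (((clockIdx d k : ℤ):ℂ) * (2*Real.pi*Complex.I)
                + (2*Real.pi*Complex.I*(m:ℂ)*((clockIdx d k : ℂ)+δ)/d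
                  + 2*Real.pi*Complex.I*δ*(((1:ℤ)):ℂ))) * (d:ℂ) := by
              congr 2
              push_cast
              field_simp
              ring
          _ = Complex.exp (2*Real.pi*Complex.I*(m:ℂ)*((clockIdx d k : ℂ)+δ)/d)
                * Complex.exp (2*Real.pi*Complex.I*δ*(((1:ℤ)):ℂ)) * (d:ℂ) := by
              rw [Complex.exp_add, Complex.exp_int_mul_two_pi_mul_I, one_mul, Complex.exp_add]
      rw [Finset.range_eq_Ico, ← Finset.sum_Ico_consecutive _ (Nat.zero_le ((-m).toNat)) hmtd,
        Finset.sum_eq_card_nsmul hval2, Finset.sum_eq_card_nsmul hval1, Nat.card_Ico, Nat.card_Ico]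
      have habs : ((|m|:ℤ):ℂ) = ((-m).toNat:ℂ) := by
        rw [abs_of_neg hm0]
        exact_mod_cast congrArg (fun z : ℤ => (z:ℂ)) (Int.toNat_of_nonneg (by omega : (0:ℤ) ≤ -m)).symm
      rw [habs]
      simp only [nsmul_eq_mul]
      rw [Nat.sub_zero]
      push_cast [Nat.cast_sub hmtd]
      ring
  rw [hcount]
  field_simp
  ring

/-- The expectation E[exp(2πi m l_I / d)] of the Markov chain started at k after I steps:
    ∑_{l} (M^I)_{l k} exp(2πi m l / d). -/
theorem stmt_14 (d : ℕ) (hd : Odd d) (hpos : 0 < d) (δ : ℝ) (m : ℤ)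
    (hm : |m| ≤ ((d : ℤ) - 1) / 2) (I : ℕ) (hI : 1 ≤ I) (k : Fin d) :
    ∑ l : Fin d, (clockM d δ ^ I) l k
        * Complex.exp (2 * Real.pi * Complex.I * (m : ℂ) * (clockIdx d l : ℂ) / d)
      = Complex.exp (2 * Real.pi * Complex.I * (m : ℂ) * ((clockIdx d k : ℂ) + (I : ℂ) * δ) / d)
        * (1 - (1 - Complex.exp (2 * Real.pi * Complex.I * δ * (((-m).sign : ℤ) : ℂ)))
            * ((|m| : ℤ) : ℂ) / d) ^ I := by
  clear hI
  induction I with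
  | zero =>
    simp only [pow_zero, Matrix.one_apply, ite_mul, one_mul, zero_mul, Finset.sum_ite_eq,
      Finset.mem_univ, if_true, Nat.cast_zero, zero_mul, add_zero, mul_one]
    rw [Finset.sum_ite_eq' Finset.univ k
      (fun x => Complex.exp (2 * Real.pi * Complex.I * (m : ℂ) * (clockIdx d x : ℂ) / d)),
      if_pos (Finset.mem_univ k)]
  | succ n ih =>
    set lam : ℂ := (1 - (1 - Complex.exp (2 * Real.pi * Complex.I * δ * (((-m).sign : ℤ) : ℂ)))
        * ((|m| : ℤ) : ℂ) / d) with hlam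
    have hstep : ∀ l : Fin d, (clockM d δ ^ (n+1)) l k
        = ∑ j : Fin d, clockM d δ l j * (clockM d δ ^ n) j k := by
      intro l
      rw [pow_succ', Matrix.mul_apply]
    calc ∑ l : Fin d, (clockM d δ ^ (n+1)) l k
            * Complex.exp (2 * Real.pi * Complex.I * (m : ℂ) * (clockIdx d l : ℂ) / d)
        = ∑ j : Fin d, (clockM d δ ^ n) j k
            * ∑ l : Fin d, clockM d δ l j
              * Complex.exp (2 * Real.pi * Complex.I * (m : ℂ) * (clockIdx d l : ℂ) / d) := by
          rw [Finset.sum_congr rfl fun l _ => by rw [hstep l, Finset.sum_mul]]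
          rw [Finset.sum_comm]
          refine Finset.sum_congr rfl fun j _ => ?_
          rw [Finset.mul_sum]
          exact Finset.sum_congr rfl fun l _ => by ring
      _ = ∑ j : Fin d, (clockM d δ ^ n) j k
            * (Complex.exp (2*Real.pi*Complex.I*(m:ℂ)*((clockIdx d j : ℂ) + δ)/d) * lam) := by
          exact Finset.sum_congr rfl fun j _ => by rw [key_step d hpos δ m hm j]
      _ = (Complex.exp (2*Real.pi*Complex.I*(m:ℂ)*δ/d) * lam)
            * ∑ j : Fin d, (clockM d δ ^ n) j k
              * Complex.exp (2 * Real.pi * Complex.I * (m : ℂ) * (clockIdx d j : ℂ) / d) := by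
          rw [Finset.mul_sum]
          refine Finset.sum_congr rfl fun j _ => ?_
          rw [show Complex.exp (2*Real.pi*Complex.I*(m:ℂ)*((clockIdx d j : ℂ) + δ)/d)
              = Complex.exp (2 * Real.pi * Complex.I * (m : ℂ) * (clockIdx d j : ℂ) / d)
                * Complex.exp (2*Real.pi*Complex.I*(m:ℂ)*δ/d) by
            rw [← Complex.exp_add]; congr 1; ring]
          ring
      _ = (Complex.exp (2*Real.pi*Complex.I*(m:ℂ)*δ/d) * lam)
            * (Complex.exp (2 * Real.pi * Complex.I * (m : ℂ) * ((clockIdx d k : ℂ) + (n : ℂ) * δ) / d)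
              * lam ^ n) := by rw [ih]
      _ = Complex.exp (2 * Real.pi * Complex.I * (m : ℂ) * ((clockIdx d k : ℂ) + ((n+1 : ℕ) : ℂ) * δ) / d)
            * lam ^ (n+1) := by
          rw [show (Complex.exp (2*Real.pi*Complex.I*(m:ℂ)*δ/d) * lam)
              * (Complex.exp (2 * Real.pi * Complex.I * (m : ℂ) * ((clockIdx d k : ℂ) + (n : ℂ) * δ) / d) * lam ^ n)
              = Complex.exp (2*Real.pi*Complex.I*(m:ℂ)*δ/d)
                * Complex.exp (2 * Real.pi * Complex.I * (m : ℂ) * ((clockIdx d k : ℂ) + (n : ℂ) * δ) / d)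
                * lam ^ (n+1) by rw [pow_succ]; ring]
          rw [← Complex.exp_add]
          congr 2
          push_cast
          field_simp
          ring
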